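/- For odd n ≥ 3, SL(n,ℝ) is generated by the matrices diag(1, B) and diag(B, 1) with B ∈ SL(n-1,ℝ). -/

import Mathlib

open Matrix


lemma reindex_stdBasisMatrix {m n R : Type*} [DecidableEq m] [DecidableEq n] [Zero R]
    (e : m ≃ n) (i j : m) (c : R) :
    Matrix.reindex e e (Matrix.single i j c) = Matrix.single (e i) (e j) c := by
  ext a b
  simp only [reindex_apply, submatrix_apply, single, of_apply]
  congr 1
  simp [Equiv.eq_symm_apply, eq_comm]

lemma fromBlocks_inr_std {l m R : Type*} [DecidableEq l] [DecidableEq m] [Zero R]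
    (p q : m) (c : R) :
    Matrix.fromBlocks (0 : Matrix l l R) 0 0 (Matrix.single p q c)
      = Matrix.single (Sum.inr p) (Sum.inr q) c := by
  ext a b
  rcases a with a | a <;> rcases b with b | b <;> simp [single]

lemma fromBlocks_inl_std {l m R : Type*} [DecidableEq l] [DecidableEq m] [Zero R]
    (p q : l) (c : R) :
    Matrix.fromBlocks (Matrix.single p q c) 0 0 (0 : Matrix m m R)
      = Matrix.single (Sum.inl p) (Sum.inl q) c := by
  ext a b
  rcases a with a | a <;> rcases b with b | b <;> simp [single]

/-- Elements of SL(n,ℝ) of the form diag(1, B), B ∈ SL(n-1,ℝ). -/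
def genSet1 (n : ℕ) (h : 1 + (n - 1) = n) : Set (Matrix.SpecialLinearGroup (Fin n) ℝ) :=
  {g | ∃ B : Matrix (Fin (n - 1)) (Fin (n - 1)) ℝ, B.det = 1 ∧
    (g : Matrix (Fin n) (Fin n) ℝ) =
      Matrix.reindex (finSumFinEquiv.trans (finCongr h)) (finSumFinEquiv.trans (finCongr h))
        (Matrix.fromBlocks 1 0 0 B)}

/-- Elements of SL(n,ℝ) of the form diag(B, 1), B ∈ SL(n-1,ℝ). -/
def genSet2 (n : ℕ) (h : (n - 1) + 1 = n) : Set (Matrix.SpecialLinearGroup (Fin n) ℝ) :=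
  {g | ∃ B : Matrix (Fin (n - 1)) (Fin (n - 1)) ℝ, B.det = 1 ∧
    (g : Matrix (Fin n) (Fin n) ℝ) =
      Matrix.reindex (finSumFinEquiv.trans (finCongr h)) (finSumFinEquiv.trans (finCongr h))
        (Matrix.fromBlocks B 0 0 1)}

lemma reindex_add {m n R : Type*} [AddCommMonoid R] (e : m ≃ n) (A B : Matrix m m R) :
    Matrix.reindex e e (A + B) = Matrix.reindex e e A + Matrix.reindex e e B := by
  ext a b; simp

lemma reindex_one {m n R : Type*} [DecidableEq m] [DecidableEq n] [Zero R] [One R] (e : m ≃ n) :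
    Matrix.reindex e e (1 : Matrix m m R) = 1 := by
  ext a b
  simp [Matrix.one_apply, EmbeddingLike.apply_eq_iff_eq]

lemma mem_genSet1 {n : ℕ} (h1 : 1 + (n - 1) = n) (i j : Fin n) (hi : i.1 ≠ 0) (hj : j.1 ≠ 0)
    (hij : i ≠ j) (c : ℝ) :
    (⟨transvection i j c, det_transvection_of_ne i j hij c⟩ :
      Matrix.SpecialLinearGroup (Fin n) ℝ) ∈ genSet1 n h1 := by
  have hi' : i.1 - 1 < n - 1 := by omega
  have hj' : j.1 - 1 < n - 1 := by omega
  set p : Fin (n - 1) := ⟨i.1 - 1, hi'⟩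
  set q : Fin (n - 1) := ⟨j.1 - 1, hj'⟩
  have hpq : p ≠ q := by
    simp only [p, q, Ne, Fin.ext_iff]
    intro h
    exact hij (Fin.ext (by omega))
  refine ⟨transvection p q c, det_transvection_of_ne p q hpq c, ?_⟩
  set e : Fin 1 ⊕ Fin (n - 1) ≃ Fin n := finSumFinEquiv.trans (finCongr h1)
  have hfb : Matrix.fromBlocks (1 : Matrix (Fin 1) (Fin 1) ℝ) 0 0 (transvection p q c)
      = 1 + Matrix.single (Sum.inr p) (Sum.inr q) c := by
    rw [transvection, show (1 : Matrix (Fin 1) (Fin 1) ℝ) = 1 + 0 by rw [add_zero],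
      show ((0 : Matrix (Fin 1) (Fin (n-1)) ℝ)) = 0 + 0 by rw [add_zero],
      show ((0 : Matrix (Fin (n-1)) (Fin 1) ℝ)) = 0 + 0 by rw [add_zero],
      ← Matrix.fromBlocks_add, Matrix.fromBlocks_one, fromBlocks_inr_std]
  have he : e (Sum.inr p) = i := by
    apply Fin.ext
    simp only [e, Equiv.trans_apply, finSumFinEquiv_apply_right, finCongr_apply, Fin.coe_cast,
      Fin.coe_natAdd]
    show 1 + (i.1 - 1) = i.1
    omega
  have he' : e (Sum.inr q) = j := by
    apply Fin.ext
    simp only [e, Equiv.trans_apply, finSumFinEquiv_apply_right, finCongr_apply, Fin.coe_cast,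
      Fin.coe_natAdd]
    show 1 + (j.1 - 1) = j.1
    omega
  show transvection i j c = _
  rw [hfb, reindex_add, reindex_one, reindex_stdBasisMatrix, he, he']
  rfl

lemma mem_genSet2 {n : ℕ} (h2 : (n - 1) + 1 = n) (i j : Fin n) (hi : i.1 < n - 1)
    (hj : j.1 < n - 1) (hij : i ≠ j) (c : ℝ) :
    (⟨transvection i j c, det_transvection_of_ne i j hij c⟩ :
      Matrix.SpecialLinearGroup (Fin n) ℝ) ∈ genSet2 n h2 := by
  set p : Fin (n - 1) := ⟨i.1, hi⟩
  set q : Fin (n - 1) := ⟨j.1, hj⟩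
  have hpq : p ≠ q := by
    simp only [p, q, Ne, Fin.ext_iff]
    intro h
    exact hij (Fin.ext h)
  refine ⟨transvection p q c, det_transvection_of_ne p q hpq c, ?_⟩
  set e : Fin (n - 1) ⊕ Fin 1 ≃ Fin n := finSumFinEquiv.trans (finCongr h2)
  have hfb : Matrix.fromBlocks (transvection p q c) 0 0 (1 : Matrix (Fin 1) (Fin 1) ℝ)
      = 1 + Matrix.single (Sum.inl p) (Sum.inl q) c := by
    rw [transvection, show (1 : Matrix (Fin 1) (Fin 1) ℝ) = 1 + 0 by rw [add_zero],
      show ((0 : Matrix (Fin 1) (Fin (n-1)) ℝ)) = 0 + 0 by rw [add_zero],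
      show ((0 : Matrix (Fin (n-1)) (Fin 1) ℝ)) = 0 + 0 by rw [add_zero],
      ← Matrix.fromBlocks_add, Matrix.fromBlocks_one, fromBlocks_inl_std]
  have he : e (Sum.inl p) = i := by
    apply Fin.ext
    simp [e, p]
  have he' : e (Sum.inl q) = j := by
    apply Fin.ext
    simp [e, q]
  show transvection i j c = _
  rw [hfb, reindex_add, reindex_one, reindex_stdBasisMatrix, he, he']
  rfl

lemma transvection_comm' {n R : Type*} [DecidableEq n] [Fintype n] [CommRing R]
    {i j k : n} (hij : i ≠ j) (hik : i ≠ k) (hkj : k ≠ j) (c : R) :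
    transvection i k c * transvection k j 1 * transvection i k (-c) * transvection k j (-1)
      = transvection i j c := by
  have h1 : single i k (-c) = -single i k c := by
    ext a b; simp only [single, of_apply, Matrix.neg_apply]; split <;> simp
  have h2 : single k j (-1 : R) = -single k j 1 := by
    ext a b; simp only [single, of_apply, Matrix.neg_apply]; split <;> simp
  simp only [transvection, h1, h2]
  set A := single i k c with hA
  set B := single k j (1 : R) with hB
  set C := single i j c with hC
  have hAA : A * A = 0 := single_mul_single_of_ne c i k i (Ne.symm hik) c
  have hBB : B * B = 0 := single_mul_single_of_ne 1 k j k (Ne.symm hkj) 1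
  have hBA : B * A = 0 := single_mul_single_of_ne 1 k j i (Ne.symm hij) c
  have hAB : A * B = C := by rw [hA, hB, hC, single_mul_single_same c i k j 1, mul_one]
  have hAC : A * C = 0 := single_mul_single_of_ne c i k i (Ne.symm hik) c
  have hBC : B * C = 0 := single_mul_single_of_ne 1 k j i (Ne.symm hij) c
  have hCA : C * A = 0 := single_mul_single_of_ne c i j i (Ne.symm hij) c
  have hCB : C * B = 0 := single_mul_single_of_ne c i j k hkj.symm 1
  have hCC : C * C = 0 := single_mul_single_of_ne c i j i (Ne.symm hij) c
  simp [Matrix.mul_add, Matrix.add_mul, Matrix.mul_assoc, hAA, hBB, hBA, hAB, hAC, hBC,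
    hCA, hCB, hCC]
  abel

/-- The transvection as an element of the special linear group. -/
def slT {n : ℕ} (i j : Fin n) (hij : i ≠ j) (c : ℝ) : Matrix.SpecialLinearGroup (Fin n) ℝ :=
  ⟨transvection i j c, det_transvection_of_ne i j hij c⟩

lemma slT_inv {n : ℕ} (i j : Fin n) (hij : i ≠ j) (c : ℝ) :
    (slT i j hij c)⁻¹ = slT i j hij (-c) := by
  apply inv_eq_of_mul_eq_one_right
  apply Subtype.ext
  show transvection i j c * transvection i j (-c) = (1 : Matrix (Fin n) (Fin n) ℝ)
  rw [transvection_mul_transvection_same _ _ hij, add_neg_cancel, transvection_zero]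

lemma slT_mem {n : ℕ} (hn : 3 ≤ n) (h1 : 1 + (n - 1) = n) (h2 : (n - 1) + 1 = n)
    (i j : Fin n) (hij : i ≠ j) (c : ℝ) :
    slT i j hij c ∈ Subgroup.closure (genSet1 n h1 ∪ genSet2 n h2) := by
  set H := Subgroup.closure (genSet1 n h1 ∪ genSet2 n h2) with hH
  have mem1 : ∀ (a b : Fin n) (hab : a ≠ b) (d : ℝ), a.1 ≠ 0 → b.1 ≠ 0 → slT a b hab d ∈ H :=
    fun a b hab d ha hb =>
      Subgroup.subset_closure (Or.inl (mem_genSet1 h1 a b ha hb hab d))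
  have mem2 : ∀ (a b : Fin n) (hab : a ≠ b) (d : ℝ), a.1 < n - 1 → b.1 < n - 1 →
      slT a b hab d ∈ H :=
    fun a b hab d ha hb =>
      Subgroup.subset_closure (Or.inr (mem_genSet2 h2 a b ha hb hab d))
  by_cases hcase1 : i.1 ≠ 0 ∧ j.1 ≠ 0
  · exact mem1 i j hij c hcase1.1 hcase1.2
  by_cases hcase2 : i.1 < n - 1 ∧ j.1 < n - 1
  · exact mem2 i j hij c hcase2.1 hcase2.2
  -- bad case : {i, j} = {0, n-1}
  have hij' : i.1 ≠ j.1 := fun h => hij (Fin.ext h)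
  have hi' : i.1 < n := i.2
  have hj' : j.1 < n := j.2
  have hbad : (i.1 = 0 ∧ j.1 = n - 1) ∨ (i.1 = n - 1 ∧ j.1 = 0) := by omega
  set k : Fin n := ⟨1, by omega⟩ with hk
  have hik : i ≠ k := fun h => by
    have := congrArg Fin.val h
    simp only [hk] at this
    omega
  have hkj : k ≠ j := fun h => by
    have := congrArg Fin.val h
    simp only [hk] at this
    omega
  have key : slT i j hij c
      = slT i k hik c * slT k j hkj 1 * (slT i k hik c)⁻¹ * (slT k j hkj 1)⁻¹ := by
    rw [slT_inv, slT_inv]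
    apply Subtype.ext
    show transvection i j c
      = transvection i k c * transvection k j 1 * transvection i k (-c) * transvection k j (-1)
    exact (transvection_comm' hij hik hkj c).symm
  rw [key]
  have hmemik : ∀ d : ℝ, slT i k hik d ∈ H := by
    intro d
    rcases hbad with ⟨hi0, hjl⟩ | ⟨hil, hj0⟩
    · exact mem2 i k hik d (by omega) (by show (1 : ℕ) < n - 1; omega)
    · exact mem1 i k hik d (by omega) (by show (1 : ℕ) ≠ 0; omega)
  have hmemkj : ∀ d : ℝ, slT k j hkj d ∈ H := by
    intro d
    rcases hbad with ⟨hi0, hjl⟩ | ⟨hil, hj0⟩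
    · exact mem1 k j hkj d (by show (1 : ℕ) ≠ 0; omega) (by omega)
    · exact mem2 k j hkj d (by show (1 : ℕ) < n - 1; omega) (by omega)
  exact mul_mem (mul_mem (mul_mem (hmemik c) (hmemkj 1)) (inv_mem (hmemik c))) (inv_mem (hmemkj 1))

lemma diag_mem_genSet1 {n : ℕ} (hn : 3 ≤ n) (h1 : 1 + (n - 1) = n) (D : Fin n → ℝ)
    (hd : (Matrix.diagonal D).det = 1) (h0 : D ⟨0, by omega⟩ = 1) :
    (⟨Matrix.diagonal D, hd⟩ : Matrix.SpecialLinearGroup (Fin n) ℝ) ∈ genSet1 n h1 := by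
  set e : Fin 1 ⊕ Fin (n - 1) ≃ Fin n := finSumFinEquiv.trans (finCongr h1) with he
  set B : Matrix (Fin (n - 1)) (Fin (n - 1)) ℝ :=
    Matrix.diagonal (fun p => D (e (Sum.inr p))) with hB
  have heq : (Matrix.diagonal D : Matrix (Fin n) (Fin n) ℝ)
      = Matrix.reindex e e (Matrix.fromBlocks 1 0 0 B) := by
    rw [hB, show (1 : Matrix (Fin 1) (Fin 1) ℝ) = Matrix.diagonal (fun _ => 1) from
      (Matrix.diagonal_one).symm, Matrix.fromBlocks_diagonal, Matrix.reindex_apply,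
      Matrix.submatrix_diagonal_equiv]
    apply congrArg Matrix.diagonal
    funext i
    rcases hsi : e.symm i with p | p
    · have hip : e (Sum.inl p) = i := by rw [← hsi, Equiv.apply_symm_apply]
      have hival : i.1 = 0 := by
        rw [← hip]
        simp [he]
      have hieq : i = ⟨0, by omega⟩ := Fin.ext hival
      rw [Function.comp_apply, hsi]
      show D i = 1
      rw [hieq, h0]
    · have hip : e (Sum.inr p) = i := by rw [← hsi, Equiv.apply_symm_apply]
      rw [Function.comp_apply, hsi]
      show D i = D (e (Sum.inr p))
      rw [hip]
  have hdB : B.det = 1 := by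
    rw [heq, Matrix.det_reindex_self, Matrix.det_fromBlocks_zero₂₁, Matrix.det_one,
      one_mul] at hd
    exact hd
  exact ⟨B, hdB, heq⟩

lemma diag_mem_genSet2 {n : ℕ} (hn : 3 ≤ n) (h2 : (n - 1) + 1 = n) (D : Fin n → ℝ)
    (hd : (Matrix.diagonal D).det = 1) (hlast : D ⟨n - 1, by omega⟩ = 1) :
    (⟨Matrix.diagonal D, hd⟩ : Matrix.SpecialLinearGroup (Fin n) ℝ) ∈ genSet2 n h2 := by
  set e : Fin (n - 1) ⊕ Fin 1 ≃ Fin n := finSumFinEquiv.trans (finCongr h2) with he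
  set B : Matrix (Fin (n - 1)) (Fin (n - 1)) ℝ :=
    Matrix.diagonal (fun p => D (e (Sum.inl p))) with hB
  have heq : (Matrix.diagonal D : Matrix (Fin n) (Fin n) ℝ)
      = Matrix.reindex e e (Matrix.fromBlocks B 0 0 1) := by
    rw [hB, show (1 : Matrix (Fin 1) (Fin 1) ℝ) = Matrix.diagonal (fun _ => 1) from
      (Matrix.diagonal_one).symm, Matrix.fromBlocks_diagonal, Matrix.reindex_apply,
      Matrix.submatrix_diagonal_equiv]
    apply congrArg Matrix.diagonal
    funext i
    rcases hsi : e.symm i with p | p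
    · have hip : e (Sum.inl p) = i := by rw [← hsi, Equiv.apply_symm_apply]
      rw [Function.comp_apply, hsi]
      show D i = D (e (Sum.inl p))
      rw [hip]
    · have hip : e (Sum.inr p) = i := by rw [← hsi, Equiv.apply_symm_apply]
      have hival : i.1 = n - 1 := by
        rw [← hip]
        simp [he]
      have hieq : i = ⟨n - 1, by omega⟩ := Fin.ext hival
      rw [Function.comp_apply, hsi]
      show D i = 1
      rw [hieq, hlast]
  have hdB : B.det = 1 := by
    rw [heq, Matrix.det_reindex_self, Matrix.det_fromBlocks_zero₂₁, Matrix.det_one,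
      mul_one] at hd
    exact hd
  exact ⟨B, hdB, heq⟩

lemma diag_mem_closure {n : ℕ} (hn : 3 ≤ n) (h1 : 1 + (n - 1) = n) (h2 : (n - 1) + 1 = n)
    (D : Fin n → ℝ) (hd : (Matrix.diagonal D).det = 1) :
    (⟨Matrix.diagonal D, hd⟩ : Matrix.SpecialLinearGroup (Fin n) ℝ) ∈
      Subgroup.closure (genSet1 n h1 ∪ genSet2 n h2) := by
  set i0 : Fin n := ⟨0, by omega⟩ with hi0
  set i1 : Fin n := ⟨1, by omega⟩ with hi1
  have hprod : ∏ i, D i = 1 := by rw [← Matrix.det_diagonal]; exact hd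
  have hne : ∀ i, D i ≠ 0 := by
    intro i
    have : ∏ j, D j ≠ 0 := by rw [hprod]; exact one_ne_zero
    exact Finset.prod_ne_zero_iff.mp this i (Finset.mem_univ i)
  set a : ℝ := D i0 with ha
  have ha0 : a ≠ 0 := hne i0
  set D1 : Fin n → ℝ := fun i => if i = i0 then a else if i = i1 then a⁻¹ else 1 with hD1
  set D2 : Fin n → ℝ := fun i => if i = i0 then 1 else if i = i1 then a * D i1 else D i with hD2
  have h01 : i0 ≠ i1 := by simp [hi0, hi1, Fin.ext_iff]
  have hmul : ∀ i, D1 i * D2 i = D i := by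
    intro i
    by_cases h : i = i0
    · subst h; simp [hD1, hD2, ha]
    · by_cases h' : i = i1
      · subst h'; simp [hD1, hD2, h, inv_mul_cancel_left₀ ha0]
      · simp [hD1, hD2, h, h']
  have hdet1 : (Matrix.diagonal D1).det = 1 := by
    rw [Matrix.det_diagonal]
    have hsub : ({i0, i1} : Finset (Fin n)) ⊆ Finset.univ := Finset.subset_univ _
    rw [← Finset.prod_subset hsub (fun x _ hx => by
      simp only [Finset.mem_insert, Finset.mem_singleton, not_or] at hx
      simp [hD1, hx.1, hx.2])]
    rw [Finset.prod_pair h01]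
    simp [hD1, h01, mul_inv_cancel₀ ha0, Ne.symm h01]
  have hdd : Matrix.diagonal D1 * Matrix.diagonal D2 = Matrix.diagonal D := by
    rw [Matrix.diagonal_mul_diagonal]
    apply congrArg Matrix.diagonal
    funext i
    exact hmul i
  have hdet2 : (Matrix.diagonal D2).det = 1 := by
    have := congrArg Matrix.det hdd
    rw [Matrix.det_mul, hdet1, one_mul] at this
    rw [this, hd]
  set g1 : Matrix.SpecialLinearGroup (Fin n) ℝ := ⟨Matrix.diagonal D1, hdet1⟩ with hg1
  set g2 : Matrix.SpecialLinearGroup (Fin n) ℝ := ⟨Matrix.diagonal D2, hdet2⟩ with hg2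
  have hsplit : (⟨Matrix.diagonal D, hd⟩ : Matrix.SpecialLinearGroup (Fin n) ℝ) = g1 * g2 := by
    apply Subtype.ext
    rw [Matrix.SpecialLinearGroup.coe_mul, hg1, hg2]
    exact hdd.symm
  have hlast1 : (⟨n - 1, by omega⟩ : Fin n) ≠ i0 := by
    simp only [hi0, Ne, Fin.ext_iff]
    omega
  have hlast2 : (⟨n - 1, by omega⟩ : Fin n) ≠ i1 := by
    simp only [hi1, Ne, Fin.ext_iff]
    omega
  have hD1last : D1 ⟨n - 1, by omega⟩ = 1 := by
    simp [hD1, hlast1, hlast2]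
  have hD2first : D2 ⟨0, by omega⟩ = 1 := by
    have : (⟨0, by omega⟩ : Fin n) = i0 := rfl
    simp [hD2, this]
  rw [hsplit]
  have hm1 : g1 ∈ Subgroup.closure (genSet1 n h1 ∪ genSet2 n h2) :=
    Subgroup.subset_closure (Or.inr (diag_mem_genSet2 hn h2 D1 hdet1 hD1last))
  have hm2 : g2 ∈ Subgroup.closure (genSet1 n h1 ∪ genSet2 n h2) :=
    Subgroup.subset_closure (Or.inl (diag_mem_genSet1 hn h1 D2 hdet2 hD2first))
  exact mul_mem hm1 hm2

/-- The transvection structure as an element of the special linear group. -/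
def tsl {n : ℕ} (t : TransvectionStruct (Fin n) ℝ) : Matrix.SpecialLinearGroup (Fin n) ℝ :=
  ⟨t.toMatrix, t.det⟩

/-- Coercion from SL(n,ℝ) to matrices as a monoid hom. -/
def slCoeHom (n : ℕ) : Matrix.SpecialLinearGroup (Fin n) ℝ →* Matrix (Fin n) (Fin n) ℝ where
  toFun := fun A => ↑A
  map_one' := rfl
  map_mul' := fun A B => Matrix.SpecialLinearGroup.coe_mul A B

/-- For odd n ≥ 3, SL(n,ℝ) is generated by the matrices diag(1, B) and
diag(B, 1) with B ∈ SL(n-1,ℝ). -/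
theorem SL_generated (n : ℕ) (hn : 3 ≤ n) (hodd : Odd n) :
    Subgroup.closure (genSet1 n (by omega) ∪ genSet2 n (by omega)) = ⊤ := by
  have h1 : 1 + (n - 1) = n := by omega
  have h2 : (n - 1) + 1 = n := by omega
  rw [eq_top_iff]
  intro g _
  show g ∈ Subgroup.closure (genSet1 n h1 ∪ genSet2 n h2)
  set H := Subgroup.closure (genSet1 n h1 ∪ genSet2 n h2) with hH
  obtain ⟨L, L', D, hM⟩ :=
    Matrix.Pivot.exists_list_transvec_mul_diagonal_mul_list_transvec
      (g : Matrix (Fin n) (Fin n) ℝ)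
  have hdetD : (Matrix.diagonal D).det = 1 := by
    have hdg := congrArg Matrix.det hM
    rw [g.2, Matrix.det_mul, Matrix.det_mul,
      Matrix.TransvectionStruct.det_toMatrix_prod, Matrix.TransvectionStruct.det_toMatrix_prod,
      one_mul, mul_one] at hdg
    exact hdg.symm
  have hcoe : ∀ LL : List (Matrix.TransvectionStruct (Fin n) ℝ),
      ((LL.map tsl).prod : Matrix (Fin n) (Fin n) ℝ)
        = (LL.map Matrix.TransvectionStruct.toMatrix).prod := by
    intro LL
    have : ((LL.map tsl).prod : Matrix (Fin n) (Fin n) ℝ) = slCoeHom n (LL.map tsl).prod := rfl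
    rw [this, map_list_prod, List.map_map]
    rfl
  have hg : g = (L.map tsl).prod * ⟨Matrix.diagonal D, hdetD⟩ * (L'.map tsl).prod := by
    apply Subtype.ext
    erw [Matrix.SpecialLinearGroup.coe_mul, Matrix.SpecialLinearGroup.coe_mul, hcoe, hcoe]
    exact hM
  have hmemL : ∀ LL : List (Matrix.TransvectionStruct (Fin n) ℝ), (LL.map tsl).prod ∈ H := by
    intro LL
    apply H.list_prod_mem
    intro x hx
    obtain ⟨t, _, rfl⟩ := List.mem_map.mp hx
    exact slT_mem hn h1 h2 t.i t.j t.hij t.c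
  rw [hg]
  exact mul_mem (mul_mem (hmemL L) (diag_mem_closure hn h1 h2 D hdetD)) (hmemL L')
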